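/- Let \widehat{\mathbf{X}} = \mathbf{Z}\Omega \in \mathbb{R}^{(p+1)\times(n+1)} with \mathbf{Z} = (Z_{(i-2)n+t})_{i=1..p+1, t=1..n} and \Omega as in the definition of the simplified model, and set \Sigma_{\widehat{\mathbf{X}}} := p^{-2}\mathrm{tr}(\widehat{\mathbf{X}}\widehat{\mathbf{X}}^T). Under condition (Z1) on (Z_t) and |c_j| \le C(j+1)^{-1-\delta} (C, \delta > 0), in the regime p/n \to y \in (0,\infty): E\,\Sigma_{\widehat{\mathbf{X}}} is bounded uniformly in n, and \mathrm{Var}\,\Sigma_{\widehat{\mathbf{X}}} = O(n^{-2}). -/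

import Mathlib

open MeasureTheory ProbabilityTheory Matrix Filter Topology ENNReal

set_option linter.unusedSectionVars false
set_option linter.unusedTactic false
set_option linter.unreachableTactic false
set_option linter.unnecessarySeqFocus false
set_option maxHeartbeats 1000000


/-- The `m × m` shift matrix `K_m`, with ones on the subdiagonal. -/
def Kmat (m : ℕ) : Matrix (Fin m) (Fin m) ℝ :=
  Matrix.of fun i j => if (i : ℕ) = (j : ℕ) + 1 then 1 else 0

/-- `χ_m(K_mᵀ) = ∑_{j=0}^m c_j (K_mᵀ)^j`. -/
noncomputable def chiK (c : ℕ → ℝ) (m : ℕ) : Matrix (Fin m) (Fin m) ℝ :=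
  ∑ j ∈ Finset.range (m + 1), c j • ((Kmat m)ᵀ) ^ j

/-- `χ̄_m(K_m) = ∑_{j=0}^m c_{m-j} (K_m)^j`. -/
noncomputable def chibarK (c : ℕ → ℝ) (m : ℕ) : Matrix (Fin m) (Fin m) ℝ :=
  ∑ j ∈ Finset.range (m + 1), c (m - j) • (Kmat m) ^ j

/-- `Ω = [0 1_n 1_n 0] ⬝ [χ_{n+1}(K_{n+1}ᵀ) ; χ̄_{n+1}(K_{n+1})] ∈ ℝ^{n × (n+1)}`. -/
noncomputable def OmegaMat (c : ℕ → ℝ) (n : ℕ) : Matrix (Fin n) (Fin (n + 1)) ℝ :=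
  (Matrix.fromCols
      (Matrix.of fun (i : Fin n) (j : Fin (n + 1)) => if (j : ℕ) = (i : ℕ) + 1 then (1:ℝ) else 0)
      (Matrix.of fun (i : Fin n) (j : Fin (n + 1)) => if (j : ℕ) = (i : ℕ) then (1:ℝ) else 0))
    * (Matrix.fromRows (chiK c (n + 1)) (chibarK c (n + 1)))


noncomputable def T0c (δ : ℝ) : ℝ := ∑' k : ℕ, ((k : ℝ) + 1) ^ (-(1 + δ))

section Core

variable {ΩS : Type*} [MeasureSpace ΩS] [IsProbabilityMeasure (ℙ : Measure ΩS)]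
variable (Z : ℤ → ΩS → ℝ) (σ4 : ℝ)
variable (hZmeas : ∀ t, Measurable (Z t))
  (hZindep : iIndepFun Z ℙ)
  (hZmean : ∀ t, ∫ ω, Z t ω = 0) (hZvar : ∀ t, ∫ ω, (Z t ω) ^ 2 = 1)
  (hZ4int : ∀ t, Integrable (fun ω => (Z t ω) ^ 4))
  (hσ4 : ∀ t, ∫ ω, (Z t ω) ^ 4 ≤ σ4)
  (int_single' : ∀ (a b u v : ℤ), a ≠ b → a ≠ u → a ≠ v →
    ∫ ω, Z a ω * Z b ω * Z u ω * Z v ω = 0)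
  (int_pairpair' : ∀ (a u : ℤ), a ≠ u → ∫ ω, Z a ω * Z a ω * (Z u ω * Z u ω) = 1)
  (int_prod2 : ∀ a b : ℤ, Integrable (fun ω => Z a ω * Z b ω) ℙ)
  (int_prod4 : ∀ a b u v : ℤ, Integrable (fun ω => Z a ω * Z b ω * Z u ω * Z v ω) ℙ)
  (mem2_prod : ∀ a b : ℤ, MemLp (fun ω => Z a ω * Z b ω) 2 ℙ)
  (int_pair' : ∀ a b : ℤ, ∫ ω, Z a ω * Z b ω = if a = b then 1 else 0)
  (moment4' : ∀ a b u v : ℤ, ∫ ω, Z a ω * Z b ω * Z u ω * Z v ω =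
      (if a = b ∧ u = v then (if a = u then ∫ ω, (Z a ω) ^ 4 else 1) else 0)
      + (if a = u ∧ b = v ∧ a ≠ b then 1 else 0)
      + (if a = v ∧ b = u ∧ a ≠ b then 1 else 0))

lemma prod4_bound (x y z w : ℝ) : |x*y*z*w| ≤ x^4+y^4+z^4+w^4+1 := by
  rw [abs_le]
  constructor <;> nlinarith [sq_nonneg (x*y - z*w), sq_nonneg (x*y + z*w), sq_nonneg (x^2-y^2), sq_nonneg (z^2-w^2), sq_nonneg x, sq_nonneg y, sq_nonneg z, sq_nonneg w, sq_nonneg (x*y), sq_nonneg (z*w)]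

lemma prod2sq_bound (x y : ℝ) : |x*y| ≤ x^4+y^4+1 := by
  rw [abs_le]
  constructor <;> nlinarith [sq_nonneg (x-y), sq_nonneg (x+y), sq_nonneg (x^2-1), sq_nonneg (y^2-1), sq_nonneg x, sq_nonneg y]

include hZmeas hZ4int in
lemma integrable_prod4 (a b u v : ℤ) :
    Integrable (fun ω => Z a ω * Z b ω * Z u ω * Z v ω) ℙ := by
  refine Integrable.mono' (((hZ4int a).add (hZ4int b)).add ((hZ4int u).add (hZ4int v)) |>.add
      (integrable_const 1)) ?_ ?_
  · exact ((((hZmeas a).mul (hZmeas b)).mul (hZmeas u)).mul (hZmeas v)).aestronglyMeasurable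
  · refine Eventually.of_forall fun ω => ?_
    rw [Real.norm_eq_abs]
    have := prod4_bound (Z a ω) (Z b ω) (Z u ω) (Z v ω)
    simp only [Pi.add_apply]
    linarith

include hZmeas hZ4int in
lemma integrable_prod2 (a b : ℤ) :
    Integrable (fun ω => Z a ω * Z b ω) ℙ := by
  refine Integrable.mono' (((hZ4int a).add (hZ4int b)).add (integrable_const 1)) ?_ ?_
  · exact ((hZmeas a).mul (hZmeas b)).aestronglyMeasurable
  · refine Eventually.of_forall fun ω => ?_
    rw [Real.norm_eq_abs]
    have := prod2sq_bound (Z a ω) (Z b ω)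
    simp only [Pi.add_apply]
    linarith

include hZmeas hZ4int in
lemma memLp2_prod (a b : ℤ) : MemLp (fun ω => Z a ω * Z b ω) 2 ℙ := by
  rw [memLp_two_iff_integrable_sq (show AEStronglyMeasurable (fun ω => Z a ω * Z b ω) ℙ from ((hZmeas a).mul (hZmeas b)).aestronglyMeasurable)]
  refine Integrable.mono' ((hZ4int a).add (hZ4int b) |>.add (integrable_const 1)) ?_ ?_
  · exact (((hZmeas a).mul (hZmeas b)).pow_const 2).aestronglyMeasurable
  · refine Eventually.of_forall fun ω => ?_
    rw [Real.norm_eq_abs]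
    have h1 : |(Z a ω * Z b ω)^2| = |Z a ω * Z a ω * (Z b ω * Z b ω)| := by ring_nf
    simp only [Pi.add_apply]
    nlinarith [sq_nonneg (Z a ω ^2 - Z b ω ^2), sq_nonneg (Z a ω * Z b ω), abs_nonneg ((Z a ω * Z b ω)^2), abs_of_nonneg (sq_nonneg (Z a ω * Z b ω))]

include hZmeas hZindep hZmean in
lemma int_single (a b u v : ℤ) (h1 : a ≠ b) (h2 : a ≠ u) (h3 : a ≠ v) :
    ∫ ω, Z a ω * Z b ω * Z u ω * Z v ω = 0 := by
  classical
  have hd : Disjoint ({a} : Finset ℤ) {b, u, v} := by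
    simp [Finset.disjoint_left, h1, h2, h3]
  have hI := hZindep.indepFun_finset {a} {b, u, v} hd hZmeas
  have hmem_b : b ∈ ({b, u, v} : Finset ℤ) := by simp
  have hmem_u : u ∈ ({b, u, v} : Finset ℤ) := by simp
  have hmem_v : v ∈ ({b, u, v} : Finset ℤ) := by simp
  have hind : IndepFun (Z a) (fun ω => Z b ω * Z u ω * Z v ω) ℙ := by
    have := hI.comp (φ := fun f : (({a} : Finset ℤ) → ℝ) => f ⟨a, by simp⟩)
      (ψ := fun f : (({b, u, v} : Finset ℤ) → ℝ) => f ⟨b, hmem_b⟩ * f ⟨u, hmem_u⟩ * f ⟨v, hmem_v⟩)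
      (measurable_pi_apply _ : Measurable fun f : (({a} : Finset ℤ) → ℝ) => f ⟨a, by simp⟩)
      (by fun_prop)
    exact this
  have : ∫ ω, Z a ω * Z b ω * Z u ω * Z v ω
      = ∫ ω, Z a ω * (Z b ω * Z u ω * Z v ω) := by
    congr 1 with ω; ring
  rw [this, hind.integral_fun_mul_eq_mul_integral (hZmeas a).aestronglyMeasurable
    (((hZmeas b).mul (hZmeas u)).mul (hZmeas v)).aestronglyMeasurable, hZmean a, zero_mul]

include hZmeas hZindep hZvar in
lemma int_pairpair (a u : ℤ) (h : a ≠ u) :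
    ∫ ω, Z a ω * Z a ω * (Z u ω * Z u ω) = 1 := by
  have hind : IndepFun (fun ω => Z a ω * Z a ω) (fun ω => Z u ω * Z u ω) ℙ := by
    have := (hZindep.indepFun h).comp (φ := fun x : ℝ => x * x) (ψ := fun x : ℝ => x * x)
      (measurable_id.mul measurable_id) (measurable_id.mul measurable_id)
    exact this
  rw [hind.integral_fun_mul_eq_mul_integral ((hZmeas a).mul (hZmeas a)).aestronglyMeasurable
    ((hZmeas u).mul (hZmeas u)).aestronglyMeasurable]
  have ha : ∫ ω, Z a ω * Z a ω = 1 := by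
    rw [← hZvar a]; congr 1 with ω; ring
  have hu : ∫ ω, Z u ω * Z u ω = 1 := by
    rw [← hZvar u]; congr 1 with ω; ring
  rw [ha, hu, one_mul]

include hZmeas hZindep hZmean hZvar in
lemma int_pair (a b : ℤ) :
    ∫ ω, Z a ω * Z b ω = if a = b then 1 else 0 := by
  split_ifs with h
  · subst h; rw [← hZvar a]; congr 1 with ω; ring
  · rw [(hZindep.indepFun h).integral_fun_mul_eq_mul_integral (hZmeas a).aestronglyMeasurable
      (hZmeas b).aestronglyMeasurable, hZmean a, zero_mul]

include int_single' int_pairpair' in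
lemma moment4 (a b u v : ℤ) :
    ∫ ω, Z a ω * Z b ω * Z u ω * Z v ω =
      (if a = b ∧ u = v then (if a = u then ∫ ω, (Z a ω) ^ 4 else 1) else 0)
      + (if a = u ∧ b = v ∧ a ≠ b then 1 else 0)
      + (if a = v ∧ b = u ∧ a ≠ b then 1 else 0) := by
  by_cases hab : a = b
  · subst hab
    by_cases huv : u = v
    · subst huv
      by_cases hau : a = u
      · subst hau
        rw [if_pos (show a = a ∧ a = a from ⟨rfl, rfl⟩),
          if_pos (show a = a from rfl),
          if_neg (show ¬(a = a ∧ a = a ∧ a ≠ a) by tauto), add_zero, add_zero]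
        congr 1 with ω; ring
      · rw [if_pos (show a = a ∧ u = u from ⟨rfl, rfl⟩), if_neg hau,
          if_neg (show ¬(a = u ∧ a = u ∧ a ≠ a) by tauto), add_zero, add_zero]
        rw [show (fun ω => Z a ω * Z a ω * Z u ω * Z u ω)
            = fun ω => Z a ω * Z a ω * (Z u ω * Z u ω) from funext fun ω => by ring]
        exact int_pairpair' a u hau
    · rw [if_neg (show ¬(a = a ∧ u = v) by tauto),
        if_neg (show ¬(a = u ∧ a = v ∧ a ≠ a) by tauto),
        if_neg (show ¬(a = v ∧ a = u ∧ a ≠ a) by tauto), add_zero, add_zero]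
      by_cases hau : a = u
      · subst hau
        have hv : v ≠ a := fun h => huv h.symm
        rw [show (fun ω => Z a ω * Z a ω * Z a ω * Z v ω)
            = fun ω => Z v ω * Z a ω * Z a ω * Z a ω from funext fun ω => by ring]
        exact int_single' v a a a hv hv hv
      · have hu : u ≠ a := fun h => hau h.symm
        rw [show (fun ω => Z a ω * Z a ω * Z u ω * Z v ω)
            = fun ω => Z u ω * Z a ω * Z a ω * Z v ω from funext fun ω => by ring]
        exact int_single' u a a v hu hu huv
  · by_cases huv : u = v
    · subst huv
      rw [if_neg (show ¬(a = b ∧ u = u) by tauto),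
        if_neg (show ¬(a = u ∧ b = u ∧ a ≠ b) from fun ⟨h1, h2, _⟩ => hab (h1.trans h2.symm)),
        add_zero, add_zero]
      by_cases hau : a = u
      · subst hau
        have hb : b ≠ a := fun h => hab h.symm
        rw [show (fun ω => Z a ω * Z b ω * Z a ω * Z a ω)
            = fun ω => Z b ω * Z a ω * Z a ω * Z a ω from funext fun ω => by ring]
        exact int_single' b a a a hb hb hb
      · exact int_single' a b u u hab hau hau
    · by_cases h1 : a = u ∧ b = v
      · obtain ⟨h1a, h1b⟩ := h1
        subst h1a; subst h1b
        rw [if_neg (show ¬(a = b ∧ a = b) by tauto),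
          if_pos (show a = a ∧ b = b ∧ a ≠ b from ⟨rfl, rfl, hab⟩),
          if_neg (show ¬(a = b ∧ b = a ∧ a ≠ b) by tauto)]
        rw [show (fun ω => Z a ω * Z b ω * Z a ω * Z b ω)
            = fun ω => Z a ω * Z a ω * (Z b ω * Z b ω) from funext fun ω => by ring]
        rw [int_pairpair' a b hab]; norm_num
      · by_cases h2 : a = v ∧ b = u
        · obtain ⟨h2a, h2b⟩ := h2
          subst h2a; subst h2b
          rw [if_neg (show ¬(a = b ∧ b = a) by tauto),
            if_neg (show ¬(a = b ∧ b = a ∧ a ≠ b) by tauto),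
            if_pos (show a = a ∧ b = b ∧ a ≠ b from ⟨rfl, rfl, hab⟩)]
          rw [show (fun ω => Z a ω * Z b ω * Z b ω * Z a ω)
              = fun ω => Z a ω * Z a ω * (Z b ω * Z b ω) from funext fun ω => by ring]
          rw [int_pairpair' a b hab]; norm_num
        · rw [if_neg (show ¬(a = b ∧ u = v) by tauto),
            if_neg (show ¬(a = u ∧ b = v ∧ a ≠ b) from fun ⟨x, y, _⟩ => h1 ⟨x, y⟩),
            if_neg (show ¬(a = v ∧ b = u ∧ a ≠ b) from fun ⟨x, y, _⟩ => h2 ⟨x, y⟩),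
            add_zero, add_zero]
          by_cases hau : a = u
          · subst hau
            have hbv : b ≠ v := fun h => h1 ⟨rfl, h⟩
            have hb : b ≠ a := fun h => hab h.symm
            rw [show (fun ω => Z a ω * Z b ω * Z a ω * Z v ω)
                = fun ω => Z b ω * Z a ω * Z a ω * Z v ω from funext fun ω => by ring]
            exact int_single' b a a v hb hb hbv
          · by_cases hav : a = v
            · subst hav
              have hbu : b ≠ u := fun h => h2 ⟨rfl, h⟩
              have hb : b ≠ a := fun h => hab h.symm
              rw [show (fun ω => Z a ω * Z b ω * Z u ω * Z a ω)
                  = fun ω => Z b ω * Z a ω * Z a ω * Z u ω from funext fun ω => by ring]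
              exact int_single' b a a u hb hb hbu
            · exact int_single' a b u v hab hau hav

include hZmeas hσ4 int_prod2 int_prod4 mem2_prod int_pair' moment4' in
lemma quad {ι : Type} [Fintype ι] [DecidableEq ι] (e : ι → ℤ) (he : Function.Injective e)
    (B : ι → ι → ℝ) :
    (∫ ω, ∑ q : ι × ι, B q.1 q.2 * (Z (e q.1) ω * Z (e q.2) ω)) = (∑ t, B t t) ∧
    variance (fun ω => ∑ q : ι × ι, B q.1 q.2 * (Z (e q.1) ω * Z (e q.2) ω)) ℙ
      ≤ σ4 * (∑ t, (B t t)^2) + 2 * ∑ q : ι × ι, (B q.1 q.2)^2 := by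
  classical
  set g : ι × ι → ΩS → ℝ := fun q ω => B q.1 q.2 * (Z (e q.1) ω * Z (e q.2) ω) with hg
  set Q : ΩS → ℝ := fun ω => ∑ q : ι × ι, g q ω with hQ
  set m4 : ι → ℝ := fun t => ∫ ω, (Z (e t) ω)^4 with hm4def
  have hgint : ∀ q : ι × ι, Integrable (g q) ℙ := fun q => (int_prod2 _ _).const_mul _
  have hQL2 : MemLp Q 2 ℙ := memLp_finset_sum _ (fun q _ => ((mem2_prod (e q.1) (e q.2)).const_mul _))
  have hEQ : (∫ ω, Q ω) = ∑ t, B t t := by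
    rw [hQ]
    rw [integral_finset_sum _ (fun q _ => hgint q)]
    have h1 : ∀ q : ι × ι, (∫ ω, g q ω) = B q.1 q.2 * (if q.1 = q.2 then 1 else 0) := by
      intro q
      rw [hg]
      simp only []
      rw [integral_const_mul, int_pair']
      congr 1
      simp [he.eq_iff]
    rw [Finset.sum_congr rfl (fun q _ => h1 q), Fintype.sum_prod_type]
    simp [mul_ite, Finset.sum_ite_eq]
  refine ⟨hEQ, ?_⟩
  have hm4 : ∀ t : ι, m4 t ≤ σ4 := fun t => hσ4 _
  -- second moment as double sum
  have hQsq : (∫ ω, (Q ω)^2) = ∑ q : ι × ι, ∑ r : ι × ι, ∫ ω, g q ω * g r ω := by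
    have h1 : (fun ω => (Q ω)^2) = fun ω => ∑ q : ι × ι, ∑ r : ι × ι, g q ω * g r ω := by
      funext ω
      rw [hQ]
      simp only []
      rw [pow_two, Finset.sum_mul_sum]
    have h2 : ∀ (q r : ι × ι), (fun ω => g q ω * g r ω) = fun ω =>
        (B q.1 q.2 * B r.1 r.2) * (Z (e q.1) ω * Z (e q.2) ω * Z (e r.1) ω * Z (e r.2) ω) := by
      intro q r; funext ω; rw [hg]; simp only []; ring
    rw [h1, integral_finset_sum]
    · refine Finset.sum_congr rfl fun q _ => integral_finset_sum _ (fun r _ => ?_)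
      rw [h2]
      exact (int_prod4 _ _ _ _).const_mul _
    · intro q _
      apply integrable_finset_sum
      intro r _
      rw [h2]
      exact (int_prod4 _ _ _ _).const_mul _
  -- value of cross integrals, conditions matching moment4 exactly
  have hkey : ∀ q r : ι × ι, (∫ ω, g q ω * g r ω) = B q.1 q.2 * B r.1 r.2 *
      ((if q.1 = q.2 ∧ r.1 = r.2 then (if q.1 = r.1 then m4 q.1 else 1) else 0)
       + (if q.1 = r.1 ∧ q.2 = r.2 ∧ q.1 ≠ q.2 then 1 else 0)
       + (if q.1 = r.2 ∧ q.2 = r.1 ∧ q.1 ≠ q.2 then 1 else 0)) := by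
    intro q r
    have h2 : (fun ω => g q ω * g r ω) = fun ω =>
        (B q.1 q.2 * B r.1 r.2) * (Z (e q.1) ω * Z (e q.2) ω * Z (e r.1) ω * Z (e r.2) ω) := by
      funext ω; rw [hg]; simp only []; ring
    rw [h2, integral_const_mul, moment4']
    congr 1
    simp only [he.eq_iff, ne_eq, hm4def]
  -- rearrange the bracket into collapsible form
  have iteswap : ∀ q r : ι × ι,
      ((if q.1 = q.2 ∧ r.1 = r.2 then (if q.1 = r.1 then m4 q.1 else 1) else 0)
       + (if q.1 = r.1 ∧ q.2 = r.2 ∧ q.1 ≠ q.2 then 1 else 0)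
       + (if q.1 = r.2 ∧ q.2 = r.1 ∧ q.1 ≠ q.2 then 1 else 0))
      = ((if q.1 = q.2 then (if r.1 = r.2 then (if q.1 = r.1 then m4 q.1 else 1) else 0) else 0)
         + (if q = r then (if q.1 = q.2 then 0 else 1) else 0)
         + (if (q.2, q.1) = r then (if q.1 = q.2 then 0 else 1) else 0)) := by
    intro q r
    congr 1
    · congr 1
      · by_cases h1 : q.1 = q.2 <;> by_cases h2 : r.1 = r.2 <;>
          simp [h1, h2]
      · by_cases hqr : q = r
        · subst hqr
          by_cases h : q.1 = q.2 <;> simp [h]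
        · rw [if_neg hqr, if_neg (fun h => hqr (Prod.ext h.1 h.2.1))]
    · by_cases hr : (q.2, q.1) = r
      · have h1 : q.2 = r.1 := congrArg Prod.fst hr
        have h2 : q.1 = r.2 := congrArg Prod.snd hr
        rw [if_pos hr]
        by_cases h : q.1 = q.2
        · rw [if_pos h, if_neg]
          rintro ⟨-, -, hne⟩; exact hne h
        · rw [if_neg h, if_pos ⟨h2, h1, h⟩]
      · rw [if_neg hr, if_neg]
        rintro ⟨h2, h1, -⟩
        exact hr (Prod.ext h1 h2)
  -- compute the three pieces
  have hP2 : ∑ q : ι × ι, ∑ r : ι × ι,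
      B q.1 q.2 * B r.1 r.2 * (if q = r then (if q.1 = q.2 then 0 else 1) else 0)
      = ∑ q : ι × ι, (if q.1 = q.2 then 0 else (B q.1 q.2)^2) := by
    refine Finset.sum_congr rfl fun q _ => ?_
    rw [Finset.sum_eq_single q]
    · by_cases h : q.1 = q.2 <;> simp [h] <;> ring
    · intro r _ hrq
      rw [if_neg (fun h => hrq h.symm), mul_zero]
    · simp
  have hP3 : ∑ q : ι × ι, ∑ r : ι × ι,
      B q.1 q.2 * B r.1 r.2 * (if (q.2, q.1) = r then (if q.1 = q.2 then 0 else 1) else 0)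
      = ∑ q : ι × ι, (if q.1 = q.2 then 0 else B q.1 q.2 * B q.2 q.1) := by
    refine Finset.sum_congr rfl fun q _ => ?_
    rw [Finset.sum_eq_single (q.2, q.1)]
    · by_cases h : q.1 = q.2 <;> simp [h] <;> ring
    · intro r _ hrq
      rw [if_neg (fun h => hrq h.symm), mul_zero]
    · simp
  have hP1 : ∑ q : ι × ι, ∑ r : ι × ι,
      B q.1 q.2 * B r.1 r.2 *
        (if q.1 = q.2 then (if r.1 = r.2 then (if q.1 = r.1 then m4 q.1 else 1) else 0) else 0)
      = ∑ t, ∑ u, B t t * B u u * (if t = u then m4 t else 1) := by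
    rw [Fintype.sum_prod_type]
    have inner : ∀ t s : ι, (∑ r : ι × ι, B t s * B r.1 r.2 *
        (if t = s then (if r.1 = r.2 then (if t = r.1 then m4 t else 1) else 0) else 0))
        = if t = s then (∑ u, B t s * B u u * (if t = u then m4 t else 1)) else 0 := by
      intro t s
      by_cases h : t = s
      · simp only [if_pos h]
        rw [Fintype.sum_prod_type]
        refine Finset.sum_congr rfl fun u _ => ?_
        rw [Finset.sum_eq_single u]
        · simp
        · intro v _ hvu
          rw [if_neg (fun hh => hvu hh.symm), mul_zero]
        · simp
      · simp [h]
    refine Finset.sum_congr rfl fun t _ => ?_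
    rw [Finset.sum_congr rfl (fun s _ => inner t s), Finset.sum_ite_eq]
    simp
  -- decompose S1
  have hS1 : ∑ t, ∑ u, B t t * B u u * (if t = u then m4 t else 1)
      = (∑ t, B t t)^2 + ∑ t, (B t t)^2 * (m4 t - 1) := by
    have h1 : ∀ t u : ι, B t t * B u u * (if t = u then m4 t else 1)
        = B t t * B u u + (if t = u then (B t t)^2 * (m4 t - 1) else 0) := by
      intro t u
      by_cases h : t = u
      · subst h; rw [if_pos rfl, if_pos rfl]; ring
      · rw [if_neg h, if_neg h]; ring
    simp only [h1]
    rw [Finset.sum_congr rfl (fun t _ => Finset.sum_add_distrib), Finset.sum_add_distrib]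
    congr 1
    · rw [pow_two, Fintype.sum_mul_sum]
    · refine Finset.sum_congr rfl fun t _ => ?_
      rw [Finset.sum_ite_eq]
      simp
  -- variance formula
  have hvar : variance Q ℙ = (∫ ω, (Q ω)^2) - (∫ ω, Q ω)^2 := by
    rw [variance_eq_sub hQL2]
    rfl
  have hQsq' : (∫ ω, (Q ω)^2)
      = (∑ t, B t t)^2 + ∑ t, (B t t)^2 * (m4 t - 1)
        + ∑ q : ι × ι, (if q.1 = q.2 then 0 else (B q.1 q.2)^2)
        + ∑ q : ι × ι, (if q.1 = q.2 then 0 else B q.1 q.2 * B q.2 q.1) := by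
    rw [hQsq]
    have : ∀ q r : ι × ι, (∫ ω, g q ω * g r ω)
        = B q.1 q.2 * B r.1 r.2 *
            (if q.1 = q.2 then (if r.1 = r.2 then (if q.1 = r.1 then m4 q.1 else 1) else 0) else 0)
          + B q.1 q.2 * B r.1 r.2 * (if q = r then (if q.1 = q.2 then 0 else 1) else 0)
          + B q.1 q.2 * B r.1 r.2 * (if (q.2, q.1) = r then (if q.1 = q.2 then 0 else 1) else 0) := by
      intro q r
      rw [hkey q r, iteswap q r]
      ring
    simp only [this]
    rw [Finset.sum_congr rfl (fun q _ => by
      rw [Finset.sum_add_distrib, Finset.sum_add_distrib]), Finset.sum_add_distrib,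
      Finset.sum_add_distrib, hP1, hP2, hP3, hS1]
  rw [hvar, hQsq', hEQ]
  -- now bound the three remaining sums
  have b1 : ∑ t, (B t t)^2 * (m4 t - 1) ≤ σ4 * ∑ t, (B t t)^2 := by
    rw [Finset.mul_sum]
    refine Finset.sum_le_sum fun t _ => ?_
    have h := hm4 t
    nlinarith [sq_nonneg (B t t)]
  have b2 : ∑ q : ι × ι, (if q.1 = q.2 then 0 else (B q.1 q.2)^2)
      ≤ ∑ q : ι × ι, (B q.1 q.2)^2 := by
    refine Finset.sum_le_sum fun q _ => ?_
    by_cases h : q.1 = q.2 <;> simp [h, sq_nonneg]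
  have hswap : ∑ q : ι × ι, (B q.2 q.1)^2 = ∑ q : ι × ι, (B q.1 q.2)^2 :=
    Fintype.sum_equiv (Equiv.prodComm ι ι) _ _ (fun q => rfl)
  have b3 : ∑ q : ι × ι, (if q.1 = q.2 then 0 else B q.1 q.2 * B q.2 q.1)
      ≤ ∑ q : ι × ι, (B q.1 q.2)^2 := by
    have step : ∑ q : ι × ι, (if q.1 = q.2 then 0 else B q.1 q.2 * B q.2 q.1)
        ≤ ∑ q : ι × ι, ((B q.1 q.2)^2 + (B q.2 q.1)^2) / 2 := by
      refine Finset.sum_le_sum fun q _ => ?_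
      by_cases h : q.1 = q.2
      · rw [if_pos h]; positivity
      · rw [if_neg h]; nlinarith [sq_nonneg (B q.1 q.2 - B q.2 q.1)]
    calc ∑ q : ι × ι, (if q.1 = q.2 then 0 else B q.1 q.2 * B q.2 q.1)
        ≤ ∑ q : ι × ι, ((B q.1 q.2)^2 + (B q.2 q.1)^2) / 2 := step
      _ = ∑ q : ι × ι, (B q.1 q.2)^2 := by
          rw [Finset.sum_congr rfl (fun q _ => by
            rw [show ((B q.1 q.2)^2 + (B q.2 q.1)^2) / 2
              = (B q.1 q.2)^2/2 + (B q.2 q.1)^2/2 by ring]), Finset.sum_add_distrib]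
          rw [← Finset.sum_div, ← Finset.sum_div, hswap]
          ring
  linarith [b1, b2, b3]

end Core
lemma Kpow_apply (m j : ℕ) (i k : Fin m) :
    ((Kmat m) ^ j) i k = if (i : ℕ) = (k : ℕ) + j then 1 else 0 := by
  induction j generalizing i k with
  | zero =>
    rw [pow_zero, Matrix.one_apply]
    simp [Fin.ext_iff]
  | succ j ih =>
    rw [pow_succ, Matrix.mul_apply]
    by_cases h : (k : ℕ) + 1 < m
    · rw [Finset.sum_eq_single (⟨(k : ℕ) + 1, h⟩ : Fin m)]
      · rw [ih]
        have hc : ((i : ℕ) = (k : ℕ) + 1 + j) ↔ ((i : ℕ) = (k : ℕ) + (j + 1)) := by omega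
        simp [Kmat, hc]
      · intro l _ hl
        simp only [Kmat, Matrix.of_apply]
        rw [if_neg (fun hh => hl (Fin.ext hh)), mul_zero]
      · simp
    · rw [Finset.sum_eq_zero, if_neg (by omega)]
      intro l _
      simp only [Kmat, Matrix.of_apply]
      rw [if_neg (by omega), mul_zero]

lemma chiK_apply (c : ℕ → ℝ) (m : ℕ) (i k : Fin m) :
    chiK c m i k = if (i : ℕ) ≤ (k : ℕ) then c ((k : ℕ) - (i : ℕ)) else 0 := by
  rw [chiK, Matrix.sum_apply]
  have h1 : ∀ j ∈ Finset.range (m + 1),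
      (c j • ((Kmat m)ᵀ) ^ j) i k = c j * (if (k : ℕ) = (i : ℕ) + j then 1 else 0) := by
    intro j _
    rw [Matrix.smul_apply, ← Matrix.transpose_pow, Matrix.transpose_apply, Kpow_apply]
    simp
  rw [Finset.sum_congr rfl h1]
  by_cases h : (i : ℕ) ≤ (k : ℕ)
  · rw [Finset.sum_eq_single_of_mem ((k : ℕ) - (i : ℕ))
      (Finset.mem_range.mpr (by omega))]
    · rw [if_pos h, if_pos (by omega), mul_one]
    · intro j _ hj
      rw [if_neg (by omega), mul_zero]
  · rw [if_neg h, Finset.sum_eq_zero]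
    intro j _
    rw [if_neg (by omega), mul_zero]

lemma chibarK_apply (c : ℕ → ℝ) (m : ℕ) (i k : Fin m) :
    chibarK c m i k = if (k : ℕ) ≤ (i : ℕ) then c (m - ((i : ℕ) - (k : ℕ))) else 0 := by
  rw [chibarK, Matrix.sum_apply]
  have h1 : ∀ j ∈ Finset.range (m + 1),
      (c (m - j) • (Kmat m) ^ j) i k = c (m - j) * (if (i : ℕ) = (k : ℕ) + j then 1 else 0) := by
    intro j _
    rw [Matrix.smul_apply, Kpow_apply]
    simp
  rw [Finset.sum_congr rfl h1]
  by_cases h : (k : ℕ) ≤ (i : ℕ)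
  · rw [Finset.sum_eq_single_of_mem ((i : ℕ) - (k : ℕ))
      (Finset.mem_range.mpr (by omega))]
    · rw [if_pos h, if_pos (by omega), mul_one]
    · intro j _ hj
      rw [if_neg (by omega), mul_zero]
  · rw [if_neg h, Finset.sum_eq_zero]
    intro j _
    rw [if_neg (by omega), mul_zero]

lemma Omega_apply (c : ℕ → ℝ) (n : ℕ) (i : Fin n) (j : Fin (n + 1)) :
    OmegaMat c n i j = if (i : ℕ) < (j : ℕ) then c ((j : ℕ) - (i : ℕ) - 1)
      else c (n + 1 - ((i : ℕ) - (j : ℕ))) := by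
  rw [OmegaMat, Matrix.fromCols_mul_fromRows, Matrix.add_apply]
  have hi1 : (i : ℕ) + 1 < n + 1 := by omega
  have hi0 : (i : ℕ) < n + 1 := by omega
  have e1 : (Matrix.of (fun (i : Fin n) (j : Fin (n + 1)) =>
      if (j : ℕ) = (i : ℕ) + 1 then (1:ℝ) else 0) * chiK c (n + 1)) i j
      = chiK c (n + 1) ⟨(i : ℕ) + 1, hi1⟩ j := by
    rw [Matrix.mul_apply]
    rw [Finset.sum_eq_single (⟨(i : ℕ) + 1, hi1⟩ : Fin (n + 1))]
    · simp
    · intro l _ hl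
      simp only [Matrix.of_apply]
      rw [if_neg (fun hh => hl (Fin.ext (by simpa using hh))), zero_mul]
    · simp
  have e2 : (Matrix.of (fun (i : Fin n) (j : Fin (n + 1)) =>
      if (j : ℕ) = (i : ℕ) then (1:ℝ) else 0) * chibarK c (n + 1)) i j
      = chibarK c (n + 1) ⟨(i : ℕ), hi0⟩ j := by
    rw [Matrix.mul_apply]
    rw [Finset.sum_eq_single (⟨(i : ℕ), hi0⟩ : Fin (n + 1))]
    · simp
    · intro l _ hl
      simp only [Matrix.of_apply]
      rw [if_neg (fun hh => hl (Fin.ext (by simpa using hh))), zero_mul]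
    · simp
  rw [e1, e2, chiK_apply, chibarK_apply]
  simp only [Fin.val_mk]
  by_cases h : (i : ℕ) < (j : ℕ)
  · rw [if_pos h, if_pos (by omega), if_neg (by omega), add_zero, Nat.sub_sub]
  · rw [if_neg h, if_neg (by omega), if_pos (by omega), zero_add]

lemma summable_g {δ : ℝ} (hδ : 0 < δ) : Summable (fun k : ℕ => ((k:ℝ)+1) ^ (-(1+δ))) := by
  have h : Summable (fun n : ℕ => (n:ℝ) ^ (-(1+δ))) :=
    Real.summable_nat_rpow.mpr (by linarith)
  have h2 := (summable_nat_add_iff 1).mpr h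
  refine h2.congr fun k => ?_
  push_cast
  rfl

lemma sum_c_le {κ : Type*} [Fintype κ] (c : ℕ → ℝ) (C δ : ℝ) (hC : 0 ≤ C) (hδ : 0 < δ)
    (hc : ∀ j : ℕ, |c j| ≤ C * ((j : ℝ) + 1) ^ (-(1 + δ)))
    (f : κ → ℕ) (hf : Function.Injective f) :
    ∑ x, |c (f x)| ≤ C * ∑' k : ℕ, ((k:ℝ)+1) ^ (-(1+δ)) := by
  classical
  have h1 : ∑ x, |c (f x)| ≤ ∑ x, C * ((f x : ℝ)+1)^(-(1+δ)) :=
    Finset.sum_le_sum (fun x _ => hc _)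
  have h2 : ∑ k ∈ Finset.image f Finset.univ, ((k : ℝ)+1)^(-(1+δ))
      = ∑ x, ((f x : ℝ)+1)^(-(1+δ)) := Finset.sum_image (fun x _ y _ h => hf h)
  have h3 : ∑ k ∈ Finset.image f Finset.univ, ((k : ℝ)+1)^(-(1+δ))
      ≤ ∑' k : ℕ, ((k:ℝ)+1) ^ (-(1+δ)) :=
    Summable.sum_le_tsum _ (fun k _ => Real.rpow_nonneg (by positivity) _) (summable_g hδ)
  calc ∑ x, |c (f x)| ≤ ∑ x, C * ((f x : ℝ)+1)^(-(1+δ)) := h1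
    _ = C * ∑ x, ((f x : ℝ)+1)^(-(1+δ)) := by rw [Finset.mul_sum]
    _ ≤ C * ∑' k : ℕ, ((k:ℝ)+1) ^ (-(1+δ)) := by
        apply mul_le_mul_of_nonneg_left _ hC
        rw [← h2]; exact h3

lemma c_le_C (c : ℕ → ℝ) (C δ : ℝ) (hC : 0 ≤ C) (hδ : 0 < δ)
    (hc : ∀ j : ℕ, |c j| ≤ C * ((j : ℝ) + 1) ^ (-(1 + δ))) (k : ℕ) : |c k| ≤ C := by
  refine (hc k).trans ?_
  have h1 : ((k:ℝ)+1) ^ (-(1+δ)) ≤ 1 :=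
    Real.rpow_le_one_of_one_le_of_nonpos (by push_cast; linarith [Nat.cast_nonneg (α := ℝ) k])
      (by linarith)
  nlinarith


def komega (n : ℕ) (i : Fin n) (j : Fin (n + 1)) : ℕ :=
  if (i : ℕ) < (j : ℕ) then (j : ℕ) - (i : ℕ) - 1 else n + 1 - ((i : ℕ) - (j : ℕ))

lemma Omega_eq_c (c : ℕ → ℝ) (n : ℕ) (i : Fin n) (j : Fin (n + 1)) :
    OmegaMat c n i j = c (komega n i j) := by
  rw [Omega_apply, komega, apply_ite c]

lemma komega_inj_row (n : ℕ) (i : Fin n) :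
    Function.Injective (fun j : Fin (n + 1) => komega n i j) := by
  intro j1 j2 h
  have h1 := j1.isLt
  have h2 := j2.isLt
  have h3 := i.isLt
  apply Fin.ext
  simp only [komega] at h
  split_ifs at h <;> omega

lemma komega_inj_col (n : ℕ) (j : Fin (n + 1)) :
    Function.Injective (fun i : Fin n => komega n i j) := by
  intro i1 i2 h
  have h1 := i1.isLt
  have h2 := i2.isLt
  have h3 := j.isLt
  apply Fin.ext
  simp only [komega] at h
  split_ifs at h <;> omega

lemma trace_quad {α β γ : Type*} [Fintype α] [Fintype β] [Fintype γ]
    (M : Matrix α β ℝ) (O : Matrix β γ ℝ) :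
    Matrix.trace ((M * O) * (M * O)ᵀ)
      = ∑ i : α, ∑ t : β, ∑ s : β, (M i t * M i s) * (∑ k : γ, O t k * O s k) := by
  rw [Matrix.trace]
  refine Finset.sum_congr rfl fun i _ => ?_
  simp only [Matrix.diag_apply, Matrix.mul_apply, Matrix.transpose_apply]
  calc ∑ k : γ, (∑ t : β, M i t * O t k) * (∑ s : β, M i s * O s k)
      = ∑ k : γ, ∑ t : β, ∑ s : β, (M i t * O t k) * (M i s * O s k) := by
        refine Finset.sum_congr rfl fun k _ => ?_
        rw [Finset.sum_mul_sum]
    _ = ∑ t : β, ∑ k : γ, ∑ s : β, (M i t * O t k) * (M i s * O s k) := Finset.sum_comm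
    _ = ∑ t : β, ∑ s : β, ∑ k : γ, (M i t * O t k) * (M i s * O s k) := by
        refine Finset.sum_congr rfl fun t _ => Finset.sum_comm
    _ = ∑ t : β, ∑ s : β, (M i t * M i s) * ∑ k : γ, O t k * O s k := by
        refine Finset.sum_congr rfl fun t _ => Finset.sum_congr rfl fun s _ => ?_
        rw [Finset.mul_sum]
        exact Finset.sum_congr rfl fun k _ => by ring


section PerN
variable {ΩS : Type*} [MeasureSpace ΩS] [IsProbabilityMeasure (ℙ : Measure ΩS)]

set_option maxHeartbeats 2000000 in
lemma per_n (Z : ℤ → ΩS → ℝ) (hZmeas : ∀ t, Measurable (Z t))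
    (hZindep : iIndepFun Z ℙ)
    (hZmean : ∀ t, ∫ ω, Z t ω = 0) (hZvar : ∀ t, ∫ ω, (Z t ω) ^ 2 = 1)
    (σ4 : ℝ) (hZ4int : ∀ t, Integrable (fun ω => (Z t ω) ^ 4))
    (hσ4 : ∀ t, ∫ ω, (Z t ω) ^ 4 ≤ σ4)
    (c : ℕ → ℝ) (C δ : ℝ) (hC : 0 < C) (hδ : 0 < δ)
    (hc : ∀ j : ℕ, |c j| ≤ C * ((j : ℝ) + 1) ^ (-(1 + δ)))
    (n pn : ℕ) (Zm : ΩS → Matrix (Fin (pn + 1)) (Fin n) ℝ)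
    (hZm : ∀ ω i t, Zm ω i t = Z ((i : ℤ) * n + (t : ℤ) + 1 - (n : ℤ)) ω) :
    ∃ D : ℝ, 0 ≤ D ∧
      D ≤ ((pn : ℝ) + 1) * (n : ℝ) * (C * (C * T0c δ)) ∧
      (∫ ω, ((pn : ℝ) ^ 2)⁻¹ *
          Matrix.trace ((Zm ω * OmegaMat c n) * (Zm ω * OmegaMat c n)ᵀ))
        = ((pn : ℝ) ^ 2)⁻¹ * D ∧
      variance (fun ω => ((pn : ℝ) ^ 2)⁻¹ *
          Matrix.trace ((Zm ω * OmegaMat c n) * (Zm ω * OmegaMat c n)ᵀ)) ℙ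
        ≤ (((pn : ℝ) ^ 2)⁻¹) ^ 2 * (((pn : ℝ) + 1) * (n : ℝ) *
            (σ4 * (C * (C * T0c δ)) ^ 2
             + 2 * ((C * (C * T0c δ))
                 * (C * T0c δ) ^ 2))) := by
  classical
  set T0 : ℝ := T0c δ with hT0def
  have hT0 : 0 ≤ T0 := by
    rw [hT0def, T0c]
    exact tsum_nonneg (fun k => Real.rpow_nonneg (by positivity) _)
  set R : ℝ := C * T0 with hRdef
  have hR0 : 0 ≤ R := mul_nonneg hC.le hT0
  set c1 : ℝ := C * R with hc1def
  have hc10 : 0 ≤ c1 := mul_nonneg hC.le hR0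
  have hσ40 : 0 ≤ σ4 := le_trans (integral_nonneg (fun ω => by positivity)) (hσ4 0)
  set Om := OmegaMat c n with hOm
  set A : Matrix (Fin n) (Fin n) ℝ := Om * Omᵀ with hAdef
  have hΩabs : ∀ (i : Fin n) (j : Fin (n + 1)), |Om i j| ≤ C := by
    intro i j
    rw [hOm, Omega_eq_c]
    exact c_le_C c C δ hC.le hδ hc _
  have hrow : ∀ i : Fin n, ∑ j, |Om i j| ≤ R := by
    intro i
    have h1 : ∀ j : Fin (n + 1), |Om i j| = |c (komega n i j)| := by
      intro j; rw [hOm, Omega_eq_c]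
    rw [Finset.sum_congr rfl (fun j _ => h1 j)]
    exact sum_c_le c C δ hC.le hδ hc _ (komega_inj_row n i)
  have hcol : ∀ j : Fin (n + 1), ∑ i, |Om i j| ≤ R := by
    intro j
    have h1 : ∀ i : Fin n, |Om i j| = |c (komega n i j)| := by
      intro i; rw [hOm, Omega_eq_c]
    rw [Finset.sum_congr rfl (fun i _ => h1 i)]
    exact sum_c_le c C δ hC.le hδ hc _ (komega_inj_col n j)
  have hA : ∀ t s : Fin n, A t s = ∑ k, Om t k * Om s k := by
    intro t s
    rw [hAdef, Matrix.mul_apply]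
    exact Finset.sum_congr rfl fun k _ => by rw [Matrix.transpose_apply]
  have habs : ∀ t s : Fin n, |A t s| ≤ c1 := by
    intro t s
    rw [hA]
    calc |∑ k, Om t k * Om s k| ≤ ∑ k, |Om t k * Om s k| :=
          Finset.abs_sum_le_sum_abs _ _
      _ = ∑ k, |Om t k| * |Om s k| := Finset.sum_congr rfl fun k _ => abs_mul _ _
      _ ≤ ∑ k, C * |Om s k| := Finset.sum_le_sum fun k _ =>
          mul_le_mul_of_nonneg_right (hΩabs t k) (abs_nonneg _)
      _ = C * ∑ k, |Om s k| := by rw [Finset.mul_sum]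
      _ ≤ C * R := mul_le_mul_of_nonneg_left (hrow s) hC.le
  have hdiag0 : ∀ t : Fin n, 0 ≤ A t t := by
    intro t
    rw [hA]
    exact Finset.sum_nonneg fun k _ => mul_self_nonneg _
  have hAbssum : ∀ t : Fin n, ∑ s, |A t s| ≤ R * R := by
    intro t
    calc ∑ s, |A t s| ≤ ∑ s, ∑ k, |Om t k| * |Om s k| := by
          refine Finset.sum_le_sum fun s _ => ?_
          rw [hA]
          calc |∑ k, Om t k * Om s k| ≤ ∑ k, |Om t k * Om s k| :=
                Finset.abs_sum_le_sum_abs _ _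
            _ = ∑ k, |Om t k| * |Om s k| := Finset.sum_congr rfl fun k _ => abs_mul _ _
      _ = ∑ k, ∑ s, |Om t k| * |Om s k| := Finset.sum_comm
      _ = ∑ k, |Om t k| * ∑ s, |Om s k| := Finset.sum_congr rfl fun k _ =>
          (Finset.mul_sum _ _ _).symm
      _ ≤ ∑ k, |Om t k| * R := Finset.sum_le_sum fun k _ =>
          mul_le_mul_of_nonneg_left (hcol k) (abs_nonneg _)
      _ = (∑ k, |Om t k|) * R := by rw [Finset.sum_mul]
      _ ≤ R * R := mul_le_mul_of_nonneg_right (hrow t) hR0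
  have hSd : ∑ t, A t t ≤ (n : ℝ) * c1 := by
    calc ∑ t, A t t ≤ ∑ _t : Fin n, c1 :=
          Finset.sum_le_sum fun t _ => (le_abs_self _).trans (habs t t)
      _ = (n : ℝ) * c1 := by
          rw [Finset.sum_const, Finset.card_univ, Fintype.card_fin, nsmul_eq_mul]
  have hSd2 : ∑ t, (A t t) ^ 2 ≤ (n : ℝ) * c1 ^ 2 := by
    calc ∑ t, (A t t) ^ 2 ≤ ∑ _t : Fin n, c1 ^ 2 := by
          refine Finset.sum_le_sum fun t _ => ?_
          rw [← sq_abs]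
          exact pow_le_pow_left₀ (abs_nonneg _) (habs t t) 2
      _ = (n : ℝ) * c1 ^ 2 := by
          rw [Finset.sum_const, Finset.card_univ, Fintype.card_fin, nsmul_eq_mul]
  have hSf : ∑ t, ∑ s, (A t s) ^ 2 ≤ (n : ℝ) * (c1 * R ^ 2) := by
    calc ∑ t, ∑ s, (A t s) ^ 2 ≤ ∑ _t : Fin n, c1 * R ^ 2 := by
          refine Finset.sum_le_sum fun t _ => ?_
          calc ∑ s, (A t s) ^ 2 ≤ ∑ s, c1 * |A t s| := by
                refine Finset.sum_le_sum fun s _ => ?_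
                rw [← sq_abs, pow_two]
                exact mul_le_mul_of_nonneg_right (habs t s) (abs_nonneg _)
            _ = c1 * ∑ s, |A t s| := by rw [Finset.mul_sum]
            _ ≤ c1 * (R * R) := mul_le_mul_of_nonneg_left (hAbssum t) hc10
            _ = c1 * R ^ 2 := by ring
      _ = (n : ℝ) * (c1 * R ^ 2) := by
          rw [Finset.sum_const, Finset.card_univ, Fintype.card_fin, nsmul_eq_mul]
  set e : (Fin (pn + 1) × Fin n) → ℤ :=
    fun q => (q.1 : ℤ) * n + (q.2 : ℤ) + 1 - (n : ℤ) with hedef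
  have he : Function.Injective e := by
    rintro ⟨i1, t1⟩ ⟨i2, t2⟩ h
    simp only [hedef] at h
    have h' : (i1 : ℤ) * n + (t1 : ℤ) = (i2 : ℤ) * n + (t2 : ℤ) := by linarith
    have ht1 : ((t1 : ℕ) : ℤ) < (n : ℤ) := by exact_mod_cast t1.isLt
    have ht2 : ((t2 : ℕ) : ℤ) < (n : ℤ) := by exact_mod_cast t2.isLt
    have ht1' : (0 : ℤ) ≤ ((t1 : ℕ) : ℤ) := Int.natCast_nonneg _
    have ht2' : (0 : ℤ) ≤ ((t2 : ℕ) : ℤ) := Int.natCast_nonneg _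
    have hii : ((i1 : ℕ) : ℤ) = ((i2 : ℕ) : ℤ) := by
      rcases lt_trichotomy ((i1 : ℕ) : ℤ) ((i2 : ℕ) : ℤ) with hlt | heq | hgt
      · exfalso
        have h1 : ((i1 : ℕ) : ℤ) + 1 ≤ ((i2 : ℕ) : ℤ) := hlt
        have h2 := mul_le_mul_of_nonneg_right h1 (show (0 : ℤ) ≤ (n : ℤ) from Int.natCast_nonneg _)
        rw [add_mul, one_mul] at h2
        linarith
      · exact heq
      · exfalso
        have h1 : ((i2 : ℕ) : ℤ) + 1 ≤ ((i1 : ℕ) : ℤ) := hgt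
        have h2 := mul_le_mul_of_nonneg_right h1 (show (0 : ℤ) ≤ (n : ℤ) from Int.natCast_nonneg _)
        rw [add_mul, one_mul] at h2
        linarith
    have hi12 : i1 = i2 := Fin.ext (by exact_mod_cast hii)
    have htt : t1 = t2 := by
      apply Fin.ext
      have h3 : ((t1 : ℕ) : ℤ) = ((t2 : ℕ) : ℤ) := by
        rw [hii] at h'
        linarith
      exact_mod_cast h3
    rw [hi12, htt]
  set B : (Fin (pn + 1) × Fin n) → (Fin (pn + 1) × Fin n) → ℝ :=
    fun x y => if x.1 = y.1 then A x.2 y.2 else 0 with hBdef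
  have hBdiag : ∀ x : Fin (pn + 1) × Fin n, B x x = A x.2 x.2 := by
    intro x
    rw [hBdef]
    exact if_pos rfl
  have hBoff : ∀ (x : Fin (pn + 1) × Fin n) (i' : Fin (pn + 1)) (s : Fin n),
      x.1 ≠ i' → B x (i', s) = 0 := by
    intro x i' s hne
    rw [hBdef]
    exact if_neg hne
  have hBon : ∀ (x : Fin (pn + 1) × Fin n) (s : Fin n), B x (x.1, s) = A x.2 s := by
    intro x s
    rw [hBdef]
    exact if_pos rfl
  have hq := quad Z σ4 hZmeas hσ4
    (fun a b => integrable_prod2 Z hZmeas hZ4int a b)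
    (fun a b u v => integrable_prod4 Z hZmeas hZ4int a b u v)
    (fun a b => memLp2_prod Z hZmeas hZ4int a b)
    (fun a b => int_pair Z hZmeas hZindep hZmean hZvar a b)
    (fun a b u v => moment4 Z
      (fun a b u v h1 h2 h3 => int_single Z hZmeas hZindep hZmean a b u v h1 h2 h3)
      (fun a u h => int_pairpair Z hZmeas hZindep hZvar a u h) a b u v)
    e he B
  have hQtr : ∀ ω, (∑ q : (Fin (pn + 1) × Fin n) × (Fin (pn + 1) × Fin n),
        B q.1 q.2 * (Z (e q.1) ω * Z (e q.2) ω))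
      = Matrix.trace ((Zm ω * Om) * (Zm ω * Om)ᵀ) := by
    intro ω
    rw [trace_quad]
    calc ∑ q : (Fin (pn + 1) × Fin n) × (Fin (pn + 1) × Fin n),
          B q.1 q.2 * (Z (e q.1) ω * Z (e q.2) ω)
        = ∑ x : Fin (pn + 1) × Fin n, ∑ y : Fin (pn + 1) × Fin n,
            B x y * (Z (e x) ω * Z (e y) ω) := Fintype.sum_prod_type _
      _ = ∑ x : Fin (pn + 1) × Fin n, ∑ i' : Fin (pn + 1), ∑ s : Fin n,
            B x (i', s) * (Z (e x) ω * Z (e (i', s)) ω) :=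
          Finset.sum_congr rfl fun x _ => Fintype.sum_prod_type _
      _ = ∑ x : Fin (pn + 1) × Fin n, ∑ s : Fin n,
            A x.2 s * (Z (e x) ω * Z (e (x.1, s)) ω) := by
          refine Finset.sum_congr rfl fun x _ => ?_
          rw [Finset.sum_eq_single x.1]
          · exact Finset.sum_congr rfl fun s _ => by rw [hBon]
          · intro i' _ hne
            exact Finset.sum_eq_zero fun s _ => by
              rw [hBoff x i' s (fun h => hne h.symm), zero_mul]
          · simp
      _ = ∑ i : Fin (pn + 1), ∑ t : Fin n, ∑ s : Fin n,
            A t s * (Z (e (i, t)) ω * Z (e (i, s)) ω) := Fintype.sum_prod_type _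
      _ = ∑ i : Fin (pn + 1), ∑ t : Fin n, ∑ s : Fin n,
            (Zm ω i t * Zm ω i s) * ∑ k, Om t k * Om s k := by
          refine Finset.sum_congr rfl fun i _ => Finset.sum_congr rfl fun t _ =>
            Finset.sum_congr rfl fun s _ => ?_
          rw [hZm ω i t, hZm ω i s, ← hA t s, hedef]
          ring
  have hfun : (fun ω => ((pn : ℝ) ^ 2)⁻¹ *
        Matrix.trace ((Zm ω * Om) * (Zm ω * Om)ᵀ))
      = fun ω => ((pn : ℝ) ^ 2)⁻¹ *
          (∑ q : (Fin (pn + 1) × Fin n) × (Fin (pn + 1) × Fin n),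
            B q.1 q.2 * (Z (e q.1) ω * Z (e q.2) ω)) := by
    funext ω
    rw [hQtr ω]
  refine ⟨∑ x : Fin (pn + 1) × Fin n, B x x, ?_, ?_, ?_, ?_⟩
  · refine Finset.sum_nonneg fun x _ => ?_
    rw [hBdiag]
    exact hdiag0 _
  · have h1 : ∑ x : Fin (pn + 1) × Fin n, B x x
        = ∑ _i : Fin (pn + 1), ∑ t : Fin n, A t t := by
      rw [Fintype.sum_prod_type]
      exact Finset.sum_congr rfl fun i _ => Finset.sum_congr rfl fun t _ =>
        hBdiag (i, t)
    rw [h1, Finset.sum_const, Finset.card_univ, Fintype.card_fin, nsmul_eq_mul]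
    push_cast
    calc ((pn : ℝ) + 1) * ∑ t, A t t ≤ ((pn : ℝ) + 1) * ((n : ℝ) * c1) :=
          mul_le_mul_of_nonneg_left hSd (by positivity)
      _ = ((pn : ℝ) + 1) * (n : ℝ) * c1 := by ring
  · rw [hfun, integral_const_mul, hq.1]
  · rw [hfun, variance_const_mul]
    have hb1 : ∑ t : Fin (pn + 1) × Fin n, (B t t) ^ 2
        ≤ ((pn : ℝ) + 1) * ((n : ℝ) * c1 ^ 2) := by
      have h1 : ∑ t : Fin (pn + 1) × Fin n, (B t t) ^ 2
          = ∑ _i : Fin (pn + 1), ∑ t : Fin n, (A t t) ^ 2 := by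
        rw [Fintype.sum_prod_type]
        exact Finset.sum_congr rfl fun i _ => Finset.sum_congr rfl fun t _ => by
          rw [hBdiag (i, t)]
      rw [h1, Finset.sum_const, Finset.card_univ, Fintype.card_fin, nsmul_eq_mul]
      push_cast
      exact mul_le_mul_of_nonneg_left hSd2 (by positivity)
    have hb2 : ∑ q : (Fin (pn + 1) × Fin n) × (Fin (pn + 1) × Fin n), (B q.1 q.2) ^ 2
        ≤ ((pn : ℝ) + 1) * ((n : ℝ) * (c1 * R ^ 2)) := by
      have h1 : ∑ q : (Fin (pn + 1) × Fin n) × (Fin (pn + 1) × Fin n), (B q.1 q.2) ^ 2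
          = ∑ _i : Fin (pn + 1), ∑ t : Fin n, ∑ s : Fin n, (A t s) ^ 2 := by
        calc ∑ q : (Fin (pn + 1) × Fin n) × (Fin (pn + 1) × Fin n), (B q.1 q.2) ^ 2
            = ∑ x : Fin (pn + 1) × Fin n, ∑ y : Fin (pn + 1) × Fin n, (B x y) ^ 2 :=
              Fintype.sum_prod_type _
          _ = ∑ x : Fin (pn + 1) × Fin n, ∑ s : Fin n, (A x.2 s) ^ 2 := by
              refine Finset.sum_congr rfl fun x _ => ?_
              rw [Fintype.sum_prod_type]
              rw [Finset.sum_eq_single x.1]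
              · exact Finset.sum_congr rfl fun s _ => by rw [hBon]
              · intro i' _ hne
                exact Finset.sum_eq_zero fun s _ => by
                  rw [hBoff x i' s (fun h => hne h.symm)]
                  norm_num
              · simp
          _ = ∑ i : Fin (pn + 1), ∑ t : Fin n, ∑ s : Fin n, (A t s) ^ 2 :=
              Fintype.sum_prod_type _
      rw [h1, Finset.sum_const, Finset.card_univ, Fintype.card_fin, nsmul_eq_mul]
      push_cast
      exact mul_le_mul_of_nonneg_left hSf (by positivity)
    have hvq : variance (fun ω => ∑ q : (Fin (pn + 1) × Fin n) × (Fin (pn + 1) × Fin n),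
          B q.1 q.2 * (Z (e q.1) ω * Z (e q.2) ω)) ℙ
        ≤ ((pn : ℝ) + 1) * (n : ℝ) * (σ4 * c1 ^ 2 + 2 * (c1 * R ^ 2)) := by
      refine le_trans hq.2 ?_
      have e1 : σ4 * (∑ t : Fin (pn + 1) × Fin n, (B t t) ^ 2)
          ≤ σ4 * (((pn : ℝ) + 1) * ((n : ℝ) * c1 ^ 2)) :=
        mul_le_mul_of_nonneg_left hb1 hσ40
      have e2 : 2 * (∑ q : (Fin (pn + 1) × Fin n) × (Fin (pn + 1) × Fin n), (B q.1 q.2) ^ 2)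
          ≤ 2 * (((pn : ℝ) + 1) * ((n : ℝ) * (c1 * R ^ 2))) := by
        refine mul_le_mul_of_nonneg_left hb2 (by norm_num)
      calc σ4 * (∑ t : Fin (pn + 1) × Fin n, (B t t) ^ 2)
            + 2 * (∑ q : (Fin (pn + 1) × Fin n) × (Fin (pn + 1) × Fin n), (B q.1 q.2) ^ 2)
          ≤ σ4 * (((pn : ℝ) + 1) * ((n : ℝ) * c1 ^ 2))
            + 2 * (((pn : ℝ) + 1) * ((n : ℝ) * (c1 * R ^ 2))) := add_le_add e1 e2
        _ = ((pn : ℝ) + 1) * (n : ℝ) * (σ4 * c1 ^ 2 + 2 * (c1 * R ^ 2)) := by ring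
    exact mul_le_mul_of_nonneg_left hvq (sq_nonneg _)

end PerN


/-- **Moments of `Σ_𝐗̂ = p⁻² tr(𝐗̂𝐗̂ᵀ)`**, where `𝐗̂ = 𝐙Ω`. Under (Z1) and polynomial
decay of the coefficients, in the regime `p/n → y ∈ (0,∞)`: `E Σ_𝐗̂` is bounded uniformly
in `n`, and `Var Σ_𝐗̂ = O(n⁻²)`. -/
theorem moments_of_trace_hat
    {ΩS : Type*} [MeasureSpace ΩS] [IsProbabilityMeasure (ℙ : Measure ΩS)]
    (Z : ℤ → ΩS → ℝ) (hZmeas : ∀ t, Measurable (Z t))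
    (hZindep : iIndepFun Z ℙ)
    -- condition (Z1)
    (hZmean : ∀ t, ∫ ω, Z t ω = 0) (hZvar : ∀ t, ∫ ω, (Z t ω) ^ 2 = 1)
    (σ4 : ℝ) (hZ4int : ∀ t, Integrable (fun ω => (Z t ω) ^ 4))
    (hσ4 : ∀ t, ∫ ω, (Z t ω) ^ 4 ≤ σ4)
    -- coefficient decay
    (c : ℕ → ℝ) (C δ : ℝ) (hC : 0 < C) (hδ : 0 < δ)
    (hc : ∀ j : ℕ, |c j| ≤ C * ((j : ℝ) + 1) ^ (-(1 + δ)))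
    -- aspect ratio
    (p : ℕ → ℕ) (y : ℝ) (hy : 0 < y)
    (hpn : Tendsto (fun n => (p n : ℝ) / (n : ℝ)) atTop (𝓝 y))
    -- the matrix 𝐙
    (Zm : (n : ℕ) → ΩS → Matrix (Fin (p n + 1)) (Fin n) ℝ)
    (hZm : ∀ n ω i t, Zm n ω i t = Z ((i : ℤ) * n + (t : ℤ) + 1 - (n : ℤ)) ω) :
    (∃ K : ℝ, ∀ n : ℕ,
      |∫ ω, ((p n : ℝ) ^ 2)⁻¹ *
          Matrix.trace ((Zm n ω * OmegaMat c n) * (Zm n ω * OmegaMat c n)ᵀ)| ≤ K) ∧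
    (∃ K : ℝ, ∀ n : ℕ,
      variance (fun ω => ((p n : ℝ) ^ 2)⁻¹ *
          Matrix.trace ((Zm n ω * OmegaMat c n) * (Zm n ω * OmegaMat c n)ᵀ)) ℙ
        ≤ K / (n : ℝ) ^ 2) := by
  classical
  have hT0 : 0 ≤ T0c δ := by rw [T0c]; exact tsum_nonneg (fun k => Real.rpow_nonneg (by positivity) _)
  have hσ40 : 0 ≤ σ4 := le_trans (integral_nonneg (fun ω => by positivity)) (hσ4 0)
  have hc10 : 0 ≤ C * (C * T0c δ) := mul_nonneg hC.le (mul_nonneg hC.le hT0)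
  have hV00 : 0 ≤ σ4 * (C * (C * T0c δ)) ^ 2 + 2 * ((C * (C * T0c δ)) * (C * T0c δ) ^ 2) :=
    add_nonneg (mul_nonneg hσ40 (sq_nonneg _))
      (mul_nonneg (by norm_num) (mul_nonneg hc10 (sq_nonneg _)))
  have hper : ∀ n : ℕ, ∃ D : ℝ, 0 ≤ D ∧
      D ≤ ((p n : ℝ) + 1) * (n : ℝ) * (C * (C * T0c δ)) ∧
      (∫ ω, ((p n : ℝ) ^ 2)⁻¹ *
          Matrix.trace ((Zm n ω * OmegaMat c n) * (Zm n ω * OmegaMat c n)ᵀ))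
        = ((p n : ℝ) ^ 2)⁻¹ * D ∧
      variance (fun ω => ((p n : ℝ) ^ 2)⁻¹ *
          Matrix.trace ((Zm n ω * OmegaMat c n) * (Zm n ω * OmegaMat c n)ᵀ)) ℙ
        ≤ (((p n : ℝ) ^ 2)⁻¹) ^ 2 * (((p n : ℝ) + 1) * (n : ℝ) *
            (σ4 * (C * (C * T0c δ)) ^ 2 + 2 * ((C * (C * T0c δ)) * (C * T0c δ) ^ 2))) :=
    fun n => per_n Z hZmeas hZindep hZmean hZvar σ4 hZ4int hσ4 c C δ hC hδ hc
      n (p n) (Zm n) (fun ω i t => hZm n ω i t)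
  have h1 : ∀ᶠ n : ℕ in atTop, y / 2 < (p n : ℝ) / (n : ℝ) :=
    hpn.eventually (eventually_gt_nhds (by linarith))
  have h2 : ∀ᶠ n : ℕ in atTop, 2 / y ≤ (n : ℝ) :=
    tendsto_natCast_atTop_atTop.eventually_ge_atTop (2 / y)
  have h3 : ∀ᶠ n : ℕ in atTop, (1 : ℝ) ≤ (n : ℝ) :=
    tendsto_natCast_atTop_atTop.eventually_ge_atTop 1
  obtain ⟨N, hN⟩ := eventually_atTop.mp ((h1.and h2).and h3)
  have hkey : ∀ n, N ≤ n → (y / 2) * n ≤ (p n : ℝ) ∧ (1 : ℝ) ≤ (p n : ℝ) ∧ (1 : ℝ) ≤ (n : ℝ) := by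
    intro n hn
    obtain ⟨⟨ha, hb⟩, hn1⟩ := hN n hn
    have hnpos : (0 : ℝ) < n := by linarith
    have hp : (y / 2) * n < (p n : ℝ) := (lt_div_iff₀ hnpos).mp ha
    have hyy : (y / 2) * (2 / y) = 1 := by field_simp
    have h4 : (y / 2) * (2 / y) ≤ (y / 2) * n :=
      mul_le_mul_of_nonneg_left hb (by linarith)
    exact ⟨hp.le, by linarith, hn1⟩
  constructor
  · refine ⟨4 * (C * (C * T0c δ)) / y + ∑ k ∈ Finset.range N,
      |∫ ω, ((p k : ℝ) ^ 2)⁻¹ *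
          Matrix.trace ((Zm k ω * OmegaMat c k) * (Zm k ω * OmegaMat c k)ᵀ)|, ?_⟩
    intro n
    have hge0 : 0 ≤ 4 * (C * (C * T0c δ)) / y := by positivity
    have hsum0 : 0 ≤ ∑ k ∈ Finset.range N,
        |∫ ω, ((p k : ℝ) ^ 2)⁻¹ *
            Matrix.trace ((Zm k ω * OmegaMat c k) * (Zm k ω * OmegaMat c k)ᵀ)| :=
      Finset.sum_nonneg fun k _ => abs_nonneg _
    by_cases hn : N ≤ n
    · obtain ⟨D, hD0, hDb, hEint, -⟩ := hper n
      obtain ⟨hyn, hp1, hn1⟩ := hkey n hn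
      rw [hEint, abs_of_nonneg (mul_nonneg (by positivity) hD0)]
      have hppos : (0 : ℝ) < (p n : ℝ) := by linarith
      have hb : ((p n : ℝ) ^ 2)⁻¹ * D ≤ 4 * (C * (C * T0c δ)) / y := by
        have h2' : ((p n : ℝ) ^ 2)⁻¹ * D
            ≤ ((p n : ℝ) ^ 2)⁻¹ * (((p n : ℝ) + 1) * (n : ℝ) * (C * (C * T0c δ))) :=
          mul_le_mul_of_nonneg_left hDb (by positivity)
        refine h2'.trans ?_
        rw [inv_mul_le_iff₀ (by positivity : (0 : ℝ) < (p n : ℝ) ^ 2),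
          mul_comm ((p n : ℝ) ^ 2), div_mul_eq_mul_div, le_div_iff₀ hy]
        have hintA := mul_le_mul (show (p n : ℝ) + 1 ≤ 2 * (p n : ℝ) by linarith)
          (show (n : ℝ) * y ≤ 2 * (p n : ℝ) by nlinarith)
          (by positivity : (0 : ℝ) ≤ (n : ℝ) * y) (by linarith : (0 : ℝ) ≤ 2 * (p n : ℝ))
        nlinarith [hintA, hc10, mul_le_mul_of_nonneg_left hintA hc10]
      linarith
    · push_neg at hn
      have hmem : n ∈ Finset.range N := Finset.mem_range.mpr hn
      have := Finset.single_le_sum (f := fun k => |∫ ω, ((p k : ℝ) ^ 2)⁻¹ *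
          Matrix.trace ((Zm k ω * OmegaMat c k) * (Zm k ω * OmegaMat c k)ᵀ)|)
        (fun k _ => abs_nonneg _) hmem
      linarith
  · refine ⟨16 * (σ4 * (C * (C * T0c δ)) ^ 2
        + 2 * ((C * (C * T0c δ)) * (C * T0c δ) ^ 2)) / y ^ 3
      + ∑ k ∈ Finset.range N, (k : ℝ) ^ 2 * variance (fun ω => ((p k : ℝ) ^ 2)⁻¹ *
          Matrix.trace ((Zm k ω * OmegaMat c k) * (Zm k ω * OmegaMat c k)ᵀ)) ℙ, ?_⟩
    intro n
    have hge0 : 0 ≤ 16 * (σ4 * (C * (C * T0c δ)) ^ 2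
        + 2 * ((C * (C * T0c δ)) * (C * T0c δ) ^ 2)) / y ^ 3 := by
      have : (0:ℝ) < y ^ 3 := by positivity
      positivity
    have hsum0 : 0 ≤ ∑ k ∈ Finset.range N, (k : ℝ) ^ 2 *
        variance (fun ω => ((p k : ℝ) ^ 2)⁻¹ *
          Matrix.trace ((Zm k ω * OmegaMat c k) * (Zm k ω * OmegaMat c k)ᵀ)) ℙ :=
      Finset.sum_nonneg fun k _ => mul_nonneg (sq_nonneg _) (variance_nonneg _ _)
    by_cases hn : N ≤ n
    · obtain ⟨D, -, -, -, hvar⟩ := hper n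
      obtain ⟨hyn, hp1, hn1⟩ := hkey n hn
      have hppos : (0 : ℝ) < (p n : ℝ) := by linarith
      have hnpos : (0 : ℝ) < (n : ℝ) := by linarith
      have hstep : (((p n : ℝ) ^ 2)⁻¹) ^ 2 * (((p n : ℝ) + 1) * (n : ℝ) *
            (σ4 * (C * (C * T0c δ)) ^ 2 + 2 * ((C * (C * T0c δ)) * (C * T0c δ) ^ 2)))
          ≤ (16 * (σ4 * (C * (C * T0c δ)) ^ 2
              + 2 * ((C * (C * T0c δ)) * (C * T0c δ) ^ 2)) / y ^ 3) / (n : ℝ) ^ 2 := by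
        have e1 : (((p n : ℝ) ^ 2)⁻¹) ^ 2 = (((p n : ℝ) ^ 4))⁻¹ := by
          rw [← inv_pow, ← pow_mul]
          norm_num
        rw [e1, inv_mul_le_iff₀ (by positivity : (0 : ℝ) < (p n : ℝ) ^ 4), div_div,
          mul_comm ((p n : ℝ) ^ 4), div_mul_eq_mul_div,
          le_div_iff₀ (by positivity : (0 : ℝ) < y ^ 3 * (n : ℝ) ^ 2)]
        have h4 : (p n : ℝ) + 1 ≤ 2 * (p n : ℝ) := by linarith
        have h5 : y * (n : ℝ) ≤ 2 * (p n : ℝ) := by nlinarith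
        have h6 : (y * (n : ℝ)) ^ 3 ≤ (2 * (p n : ℝ)) ^ 3 :=
          pow_le_pow_left₀ (by positivity) h5 3
        nlinarith [mul_le_mul h4 h6 (by positivity : (0 : ℝ) ≤ (y * (n : ℝ)) ^ 3)
          (by linarith : (0 : ℝ) ≤ 2 * (p n : ℝ)), hV00,
          mul_le_mul_of_nonneg_left (mul_le_mul h4 h6
            (by positivity : (0 : ℝ) ≤ (y * (n : ℝ)) ^ 3)
            (by linarith : (0 : ℝ) ≤ 2 * (p n : ℝ))) hV00]
      refine (hvar.trans hstep).trans ?_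
      have hn0 : (0:ℝ) < (n : ℝ) := by linarith
      have hnn : (0:ℝ) < (n : ℝ) ^ 2 := by positivity
      exact (div_le_div_iff_of_pos_right hnn).mpr (by linarith)
    · push_neg at hn
      rcases Nat.eq_zero_or_pos n with h0 | hpos
      · subst h0
        have hz : (fun ω => ((p 0 : ℝ) ^ 2)⁻¹ *
            Matrix.trace ((Zm 0 ω * OmegaMat c 0) * (Zm 0 ω * OmegaMat c 0)ᵀ))
            = fun _ : ΩS => (0 : ℝ) := by
          funext ω
          have ht : Matrix.trace ((Zm 0 ω * OmegaMat c 0) * (Zm 0 ω * OmegaMat c 0)ᵀ) = 0 := by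
            rw [trace_quad]
            simp
          rw [ht, mul_zero]
        rw [hz, show (fun _ : ΩS => (0 : ℝ)) = (0 : ΩS → ℝ) from rfl, variance_zero]
        simp
      · have hmem : n ∈ Finset.range N := Finset.mem_range.mpr hn
        have hterm := Finset.single_le_sum
          (f := fun k : ℕ => (k : ℝ) ^ 2 * variance (fun ω => ((p k : ℝ) ^ 2)⁻¹ *
            Matrix.trace ((Zm k ω * OmegaMat c k) * (Zm k ω * OmegaMat c k)ᵀ)) ℙ)
          (fun k _ => mul_nonneg (sq_nonneg _) (variance_nonneg _ _)) hmem
        have hnpos : (0 : ℝ) < (n : ℝ) ^ 2 := by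
          have : (0:ℝ) < (n:ℝ) := by exact_mod_cast hpos
          positivity
        rw [le_div_iff₀ hnpos]
        calc variance (fun ω => ((p n : ℝ) ^ 2)⁻¹ *
              Matrix.trace ((Zm n ω * OmegaMat c n) * (Zm n ω * OmegaMat c n)ᵀ)) ℙ * (n : ℝ) ^ 2
            = (n : ℝ) ^ 2 * variance (fun ω => ((p n : ℝ) ^ 2)⁻¹ *
              Matrix.trace ((Zm n ω * OmegaMat c n) * (Zm n ω * OmegaMat c n)ᵀ)) ℙ := by ring
          _ ≤ ∑ k ∈ Finset.range N, (k : ℝ) ^ 2 * variance (fun ω => ((p k : ℝ) ^ 2)⁻¹ *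
              Matrix.trace ((Zm k ω * OmegaMat c k) * (Zm k ω * OmegaMat c k)ᵀ)) ℙ := hterm
          _ ≤ _ := by linarith
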